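/- Let R ∈ ℝ and let q₀, q₁ : [R,∞) → ℝ be continuous with q₀(ζ) ≥ 1/4 for all ζ ≥ R. Let ψ₀, ψ₁ : [R,∞) → (0,∞) be bounded, twice continuously differentiable functions satisfying ψ₁''(ζ) = (q₀(ζ) + q₁(ζ)) ψ₁(ζ) and ψ₀''(ζ) = q₀(ζ) ψ₀(ζ) for all ζ ≥ R, such that ψ₀(ζ), ψ₁(ζ), ψ₀'(ζ), ψ₁'(ζ) all tend to 0 as ζ → +∞. Assume there exist constants C, C' > 0 such that |q₁(s)| ≤ C' e^{−s} for all s ≥ R, and ψ₀(s)/ψ₀(σ) ≤ C and ψ₁(s)/ψ₁(σ) ≤ C whenever R ≤ σ ≤ s. Then there exists a constant c ∈ (0,∞) such that ψ₁(ζ)/ψ₀(ζ) → c as ζ → +∞. -/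

import Mathlib

open Real Set Filter

/-- comparison of decaying positive solutions of the Schrödinger-type equations
`ψ₁'' = (q₀ + q₁)ψ₁` and `ψ₀'' = q₀ψ₀` on `[R,∞)` with `q₀ ≥ 1/4` and `q₁` exponentially
small: under boundedness, decay-at-infinity and ratio-boundedness assumptions, the ratio
`ψ₁/ψ₀` converges to a finite positive limit at `+∞`. -/
theorem stmt_13 (R : ℝ) (q₀ q₁ ψ₀ ψ₁ : ℝ → ℝ)
    (hq₀cont : ContinuousOn q₀ (Ici R)) (hq₁cont : ContinuousOn q₁ (Ici R))
    (hq₀ : ∀ ζ ≥ R, (1 : ℝ) / 4 ≤ q₀ ζ)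
    (hψ₀pos : ∀ ζ ≥ R, 0 < ψ₀ ζ) (hψ₁pos : ∀ ζ ≥ R, 0 < ψ₁ ζ)
    (hψ₀bdd : ∃ M : ℝ, ∀ ζ ≥ R, |ψ₀ ζ| ≤ M) (hψ₁bdd : ∃ M : ℝ, ∀ ζ ≥ R, |ψ₁ ζ| ≤ M)
    (hψ₀reg : ContDiff ℝ 2 ψ₀) (hψ₁reg : ContDiff ℝ 2 ψ₁)
    (hode₁ : ∀ ζ ≥ R, deriv (deriv ψ₁) ζ = (q₀ ζ + q₁ ζ) * ψ₁ ζ)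
    (hode₀ : ∀ ζ ≥ R, deriv (deriv ψ₀) ζ = q₀ ζ * ψ₀ ζ)
    (hlim₀ : Tendsto ψ₀ atTop (nhds 0)) (hlim₁ : Tendsto ψ₁ atTop (nhds 0))
    (hlim₀' : Tendsto (deriv ψ₀) atTop (nhds 0)) (hlim₁' : Tendsto (deriv ψ₁) atTop (nhds 0))
    (C C' : ℝ) (hC : 0 < C) (hC' : 0 < C')
    (hq₁dec : ∀ s ≥ R, |q₁ s| ≤ C' * Real.exp (-s))
    (hratio₀ : ∀ σ ≥ R, ∀ s ≥ σ, ψ₀ s / ψ₀ σ ≤ C)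
    (hratio₁ : ∀ σ ≥ R, ∀ s ≥ σ, ψ₁ s / ψ₁ σ ≤ C) :
    ∃ c : ℝ, 0 < c ∧ Tendsto (fun ζ => ψ₁ ζ / ψ₀ ζ) atTop (nhds c) := by
  -- basic differentiability facts
  have key : ∀ ψ : ℝ → ℝ, ContDiff ℝ 2 ψ → Differentiable ℝ ψ ∧ Differentiable ℝ (deriv ψ) := by
    intro ψ h
    have h2 : ContDiff ℝ ((1:WithTop ℕ∞)+1) ψ := by norm_num; exact h
    have := contDiff_succ_iff_deriv.mp h2
    exact ⟨this.1, this.2.2.differentiable one_ne_zero⟩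
  obtain ⟨hd₀, hd₀'⟩ := key ψ₀ hψ₀reg
  obtain ⟨hd₁, hd₁'⟩ := key ψ₁ hψ₁reg
  -- the Wronskian
  set W : ℝ → ℝ := fun t => deriv ψ₁ t * ψ₀ t - ψ₁ t * deriv ψ₀ t with hWdef
  have hWcont : Continuous W :=
    ((hd₁'.continuous.mul hd₀.continuous).sub (hd₁.continuous.mul hd₀'.continuous))
  have hWderiv : ∀ t ≥ R, HasDerivAt W (q₁ t * (ψ₁ t * ψ₀ t)) t := by
    intro t ht
    have h := (((hd₁' t).hasDerivAt.mul (hd₀ t).hasDerivAt).sub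
      ((hd₁ t).hasDerivAt.mul (hd₀' t).hasDerivAt))
    refine h.congr_deriv ?_
    rw [hode₁ t ht, hode₀ t ht]; ring
  have hWlim : Tendsto W atTop (nhds 0) := by
    have := (hlim₁'.mul hlim₀).sub (hlim₁.mul hlim₀')
    simpa using this
  set K : ℝ := C' * C ^ 2 with hKdef
  have hK : 0 < K := by positivity
  -- step 1: |W ζ| ≤ K * exp (-ζ) * (ψ₁ ζ * ψ₀ ζ) for ζ ≥ R
  have hWbound : ∀ ζ ≥ R, |W ζ| ≤ K * Real.exp (-ζ) * (ψ₁ ζ * ψ₀ ζ) := by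
    intro ζ hζ
    have hψ₁ζ := hψ₁pos ζ hζ
    have hψ₀ζ := hψ₀pos ζ hζ
    have hmain : ∀ T ≥ ζ, |W ζ| ≤ |W T| + K * Real.exp (-ζ) * (ψ₁ ζ * ψ₀ ζ) := by
      intro T hT
      have hsub : Icc ζ T ⊆ Ici R := fun x hx => le_trans hζ hx.1
      have hint : IntervalIntegrable (fun s => q₁ s * (ψ₁ s * ψ₀ s)) MeasureTheory.volume ζ T := by
        apply ContinuousOn.intervalIntegrable_of_Icc hT
        exact (hq₁cont.mono hsub).mul (hd₁.continuous.mul hd₀.continuous).continuousOn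
      have hftc : ∫ s in ζ..T, q₁ s * (ψ₁ s * ψ₀ s) = W T - W ζ := by
        apply intervalIntegral.integral_eq_sub_of_hasDerivAt
        · intro t ht
          rw [uIcc_of_le hT] at ht
          exact hWderiv t (le_trans hζ ht.1)
        · exact hint
      have habs : |∫ s in ζ..T, q₁ s * (ψ₁ s * ψ₀ s)| ≤
          ∫ s in ζ..T, K * (ψ₁ ζ * ψ₀ ζ) * Real.exp (-s) := by
        refine le_trans (intervalIntegral.abs_integral_le_integral_abs hT) ?_
        apply intervalIntegral.integral_mono_on hT
        · exact hint.abs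
        · apply Continuous.intervalIntegrable
          continuity
        · intro s hs
          have hsR : R ≤ s := le_trans hζ hs.1
          have hψ₁s := hψ₁pos s hsR
          have hψ₀s := hψ₀pos s hsR
          have h1 : ψ₁ s ≤ C * ψ₁ ζ := by
            have := hratio₁ ζ hζ s hs.1
            rwa [div_le_iff₀ hψ₁ζ] at this
          have h0 : ψ₀ s ≤ C * ψ₀ ζ := by
            have := hratio₀ ζ hζ s hs.1
            rwa [div_le_iff₀ hψ₀ζ] at this
          have hq := hq₁dec s hsR
          calc |q₁ s * (ψ₁ s * ψ₀ s)| = |q₁ s| * (ψ₁ s * ψ₀ s) := by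
                rw [abs_mul, abs_of_pos (show (0:ℝ) < ψ₁ s * ψ₀ s by positivity)]
            _ ≤ (C' * Real.exp (-s)) * ((C * ψ₁ ζ) * (C * ψ₀ ζ)) := by
                apply mul_le_mul hq _ (by positivity) (by positivity)
                exact mul_le_mul h1 h0 hψ₀s.le (by positivity)
            _ = K * (ψ₁ ζ * ψ₀ ζ) * Real.exp (-s) := by rw [hKdef]; ring
      have hexp : ∫ s in ζ..T, K * (ψ₁ ζ * ψ₀ ζ) * Real.exp (-s)
          = K * (ψ₁ ζ * ψ₀ ζ) * (Real.exp (-ζ) - Real.exp (-T)) := by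
        rw [intervalIntegral.integral_const_mul]
        have : ∫ s in ζ..T, Real.exp (-s) = (fun s => -Real.exp (-s)) T - (fun s => -Real.exp (-s)) ζ := by
          apply intervalIntegral.integral_eq_sub_of_hasDerivAt
          · intro t _
            exact (((Real.hasDerivAt_exp (-t)).comp t ((hasDerivAt_id t).neg)).neg).congr_deriv (by simp)
          · apply Continuous.intervalIntegrable; continuity
        rw [this]; ring
      have hWζ : W ζ = W T - ∫ s in ζ..T, q₁ s * (ψ₁ s * ψ₀ s) := by rw [hftc]; ring
      calc |W ζ| ≤ |W T| + |∫ s in ζ..T, q₁ s * (ψ₁ s * ψ₀ s)| := by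
            rw [hWζ]; exact abs_sub _ _
        _ ≤ |W T| + K * (ψ₁ ζ * ψ₀ ζ) * (Real.exp (-ζ) - Real.exp (-T)) := by
            rw [← hexp]; exact add_le_add le_rfl habs
        _ ≤ |W T| + K * Real.exp (-ζ) * (ψ₁ ζ * ψ₀ ζ) := by
            have : K * (ψ₁ ζ * ψ₀ ζ) * (Real.exp (-ζ) - Real.exp (-T))
                ≤ K * Real.exp (-ζ) * (ψ₁ ζ * ψ₀ ζ) := by
              have h1 : Real.exp (-ζ) - Real.exp (-T) ≤ Real.exp (-ζ) := by
                have := Real.exp_pos (-T); linarith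
              calc K * (ψ₁ ζ * ψ₀ ζ) * (Real.exp (-ζ) - Real.exp (-T))
                  ≤ K * (ψ₁ ζ * ψ₀ ζ) * Real.exp (-ζ) :=
                    mul_le_mul_of_nonneg_left h1 (by positivity)
                _ = K * Real.exp (-ζ) * (ψ₁ ζ * ψ₀ ζ) := by ring
            linarith
    have htend : Tendsto (fun T => |W T| + K * Real.exp (-ζ) * (ψ₁ ζ * ψ₀ ζ)) atTop
        (nhds (0 + K * Real.exp (-ζ) * (ψ₁ ζ * ψ₀ ζ))) := by
      have ha : Tendsto (fun T => |W T|) atTop (nhds 0) := by simpa using hWlim.abs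
      exact ha.add tendsto_const_nhds
    rw [zero_add] at htend
    exact ge_of_tendsto htend (eventually_atTop.mpr ⟨ζ, hmain⟩)
  -- the logarithmic derivative
  set G : ℝ → ℝ := fun ζ => W ζ / (ψ₁ ζ * ψ₀ ζ) with hGdef
  set g : ℝ → ℝ := fun ζ => Real.log (ψ₁ ζ / ψ₀ ζ) with hgdef
  have hgderiv : ∀ ζ ≥ R, HasDerivAt g (G ζ) ζ := by
    intro ζ hζ
    have hψ₁ζ := hψ₁pos ζ hζ
    have hψ₀ζ := hψ₀pos ζ hζ
    have hdiv : HasDerivAt (fun x => ψ₁ x / ψ₀ x)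
        ((deriv ψ₁ ζ * ψ₀ ζ - ψ₁ ζ * deriv ψ₀ ζ) / ψ₀ ζ ^ 2) ζ :=
      (hd₁ ζ).hasDerivAt.div (hd₀ ζ).hasDerivAt hψ₀ζ.ne'
    have hlog := hdiv.log (by positivity : (0:ℝ) < ψ₁ ζ / ψ₀ ζ).ne'
    convert hlog using 1
    rw [hGdef, hWdef]
    field_simp
  have hGbound : ∀ ζ ≥ R, |G ζ| ≤ K * Real.exp (-ζ) := by
    intro ζ hζ
    have hψ₁ζ := hψ₁pos ζ hζ
    have hψ₀ζ := hψ₀pos ζ hζ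
    have hP : (0:ℝ) < ψ₁ ζ * ψ₀ ζ := by positivity
    rw [hGdef]
    rw [abs_div, abs_of_pos hP, div_le_iff₀ hP]
    calc |W ζ| ≤ K * Real.exp (-ζ) * (ψ₁ ζ * ψ₀ ζ) := hWbound ζ hζ
      _ = K * Real.exp (-ζ) * (ψ₁ ζ * ψ₀ ζ) := rfl
  have hGcont : ContinuousOn G (Ici R) := by
    apply ContinuousOn.div hWcont.continuousOn
      (hd₁.continuous.mul hd₀.continuous).continuousOn
    intro x hx
    exact (mul_pos (hψ₁pos x hx) (hψ₀pos x hx)).ne'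
  -- G is integrable on Ioi R
  have hGint : MeasureTheory.IntegrableOn G (Ioi R) := by
    have hdom : MeasureTheory.IntegrableOn (fun s => K * Real.exp (-s)) (Ioi R) := by
      have := (exp_neg_integrableOn_Ioi R (one_pos)).const_mul K
      simpa [MeasureTheory.IntegrableOn] using this
    apply MeasureTheory.Integrable.mono' hdom
    · exact ((hGcont.mono Ioi_subset_Ici_self).aestronglyMeasurable measurableSet_Ioi)
    · filter_upwards [MeasureTheory.ae_restrict_mem measurableSet_Ioi] with s hs
      simpa using hGbound s (le_of_lt hs)
  -- FTC for g
  have hftc : ∀ ζ ≥ R, g ζ = g R + ∫ s in R..ζ, G s := by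
    intro ζ hζ
    have : ∫ s in R..ζ, G s = g ζ - g R := by
      apply intervalIntegral.integral_eq_sub_of_hasDerivAt
      · intro t ht
        rw [uIcc_of_le hζ] at ht
        exact hgderiv t ht.1
      · apply ContinuousOn.intervalIntegrable_of_Icc hζ
        exact hGcont.mono (fun x hx => hx.1)
    rw [this]; ring
  have hIlim : Tendsto (fun ζ => ∫ s in R..ζ, G s) atTop
      (nhds (∫ s in Ioi R, G s)) :=
    MeasureTheory.intervalIntegral_tendsto_integral_Ioi R hGint tendsto_id
  have hglim : Tendsto g atTop (nhds (g R + ∫ s in Ioi R, G s)) := by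
    apply Tendsto.congr' _ (tendsto_const_nhds.add hIlim)
    filter_upwards [eventually_ge_atTop R] with ζ hζ
    exact (hftc ζ hζ).symm
  refine ⟨Real.exp (g R + ∫ s in Ioi R, G s), Real.exp_pos _, ?_⟩
  have := (Real.continuous_exp.continuousAt.tendsto).comp hglim
  apply Tendsto.congr' _ this
  filter_upwards [eventually_ge_atTop R] with ζ hζ
  simp only [Function.comp_apply, hgdef]
  rw [Real.exp_log (div_pos (hψ₁pos ζ hζ) (hψ₀pos ζ hζ))]
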